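/- For independent pairs (X₁,Y₁) ∼ p₁ and (X₂,Y₂) ∼ p₂ of finite-valued random variables, s*((X₁,X₂);(Y₁,Y₂)) = max{s*(X₁;Y₁), s*(X₂;Y₂)}, where the joint channel is p(y₁,y₂|x₁,x₂) = p₁(y₁|x₁)p₂(y₂|x₂) and the input distribution is p₁(x₁)p₂(x₂). -/

import Mathlib

open scoped BigOperators

noncomputable section

/-- `p` is a probability mass function on a finite type. -/
def IsPMF {X : Type*} [Fintype X] (p : X → ℝ) : Prop :=
  (∀ x, 0 ≤ p x) ∧ ∑ x, p x = 1

/-- `p` is a joint probability mass function. -/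
def IsJointPMF {X Y : Type*} [Fintype X] [Fintype Y] (p : X → Y → ℝ) : Prop :=
  (∀ x y, 0 ≤ p x y) ∧ ∑ x, ∑ y, p x y = 1

/-- Hirschfeld–Gebelein–Rényi maximal correlation of a joint pmf `p`. -/
def maxCorr {X Y : Type*} [Fintype X] [Fintype Y] (p : X → Y → ℝ) : ℝ :=
  sSup {c : ℝ | ∃ f : X → ℝ, ∃ g : Y → ℝ,
    (∑ x, ∑ y, p x y * f x) = 0 ∧ (∑ x, ∑ y, p x y * g y) = 0 ∧
    (∑ x, ∑ y, p x y * (f x)^2) = 1 ∧ (∑ x, ∑ y, p x y * (g y)^2) = 1 ∧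
    c = ∑ x, ∑ y, p x y * f x * g y}

/-- Relative entropy (KL divergence) between pmfs on a finite type. -/
def KL {X : Type*} [Fintype X] (r p : X → ℝ) : ℝ :=
  ∑ x, r x * Real.log (r x / p x)

/-- `s*(X;Y)` for input distribution `p` and channel `W`. -/
def sStar {X Y : Type*} [Fintype X] [Fintype Y] (p : X → ℝ) (W : X → Y → ℝ) : ℝ :=
  sSup {c : ℝ | ∃ r : X → ℝ, IsPMF r ∧ r ≠ p ∧
    c = KL (fun y => ∑ x, r x * W x y) (fun y => ∑ x, p x * W x y) / KL r p}

/-- Shannon entropy of a pmf on a finite type. -/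
def entropy {X : Type*} [Fintype X] (p : X → ℝ) : ℝ :=
  ∑ x, Real.negMulLog (p x)

/-- Mutual information of a joint pmf. -/
def mutInfo {X Y : Type*} [Fintype X] [Fintype Y] (p : X → Y → ℝ) : ℝ :=
  entropy (fun x => ∑ y, p x y) + entropy (fun y => ∑ x, p x y)
    - entropy (fun z : X × Y => p z.1 z.2)

end


open Real Finset

/-- Pointwise Gibbs: a - b ≤ a log(a/b). -/
lemma gibbs_scalar {a b : ℝ} (ha : 0 ≤ a) (hb : 0 ≤ b) (hab : b = 0 → a = 0) :
    a - b ≤ a * Real.log (a / b) := by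
  rcases eq_or_lt_of_le hb with hb0 | hb0
  · simp [hab hb0.symm, ← hb0]
  rcases eq_or_lt_of_le ha with ha0 | ha0
  · simp [← ha0]; linarith
  · have h := Real.log_le_sub_one_of_pos (div_pos hb0 ha0)
    have hlog : Real.log (a / b) = - Real.log (b / a) := by
      rw [← Real.log_inv]; congr 1; field_simp
    rw [hlog]
    have : b / a - 1 ≥ Real.log (b / a) := h
    calc a - b = a * (1 - b / a) := by field_simp
    _ ≤ a * (- Real.log (b / a)) := by
        apply mul_le_mul_of_nonneg_left _ ha
        linarith
    _ = a * -Real.log (b / a) := rfl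

/-- Strict pointwise Gibbs. -/
lemma gibbs_scalar_strict {a b : ℝ} (ha : 0 ≤ a) (hb : 0 < b) (hne : a ≠ b) :
    a - b < a * Real.log (a / b) := by
  rcases eq_or_lt_of_le ha with ha0 | ha0
  · simp [← ha0]; linarith
  · have hba : b / a ≠ 1 := by
      intro h; apply hne; field_simp at h; linarith
    have h := Real.log_lt_sub_one_of_pos (div_pos hb ha0) hba
    have hlog : Real.log (a / b) = - Real.log (b / a) := by
      rw [← Real.log_inv]; congr 1; field_simp
    rw [hlog]
    calc a - b = a * (1 - b / a) := by field_simp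
    _ < a * (- Real.log (b / a)) := by
        apply mul_lt_mul_of_pos_left _ ha0
        linarith

/-- Log-sum inequality. -/
lemma log_sum_ineq {ι : Type*} (s : Finset ι) (a b : ι → ℝ)
    (ha : ∀ i ∈ s, 0 ≤ a i) (hb : ∀ i ∈ s, 0 ≤ b i)
    (hab : ∀ i ∈ s, b i = 0 → a i = 0) :
    (∑ i ∈ s, a i) * Real.log ((∑ i ∈ s, a i) / (∑ i ∈ s, b i))
      ≤ ∑ i ∈ s, a i * Real.log (a i / b i) := by
  set A := ∑ i ∈ s, a i with hA
  set B := ∑ i ∈ s, b i with hB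
  have hBnn : 0 ≤ B := Finset.sum_nonneg hb
  rcases eq_or_lt_of_le hBnn with hB0 | hB0
  · -- B = 0 : all b = 0, hence all a = 0
    have hb0 : ∀ i ∈ s, b i = 0 := (Finset.sum_eq_zero_iff_of_nonneg hb).1 hB0.symm
    have ha0 : ∀ i ∈ s, a i = 0 := fun i hi => hab i hi (hb0 i hi)
    have : A = 0 := Finset.sum_eq_zero ha0
    rw [this]
    simp only [zero_mul]
    exact Finset.sum_nonneg fun i hi => by rw [ha0 i hi]; simp
  · -- B > 0 : Jensen
    have key := (Real.convexOn_mul_log).map_centerMass_le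
      (t := s) (w := b) (p := fun i => a i / b i)
      (fun i hi => hb i hi) (by rwa [← hB]) (fun i hi => Set.mem_Ici.2 (div_nonneg (ha i hi) (hb i hi)))
    rw [Finset.centerMass, Finset.centerMass] at key
    have h1 : ∑ i ∈ s, b i • (a i / b i) = A := by
      rw [hA]; apply Finset.sum_congr rfl
      intro i hi
      rcases eq_or_lt_of_le (hb i hi) with h0 | h0
      · rw [← h0, hab i hi (h0.symm)]; simp
      · rw [smul_eq_mul]; field_simp
    have h2 : ∑ i ∈ s, b i • ((fun x => x * Real.log x) ∘ fun i => a i / b i) i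
        = ∑ i ∈ s, a i * Real.log (a i / b i) := by
      apply Finset.sum_congr rfl
      intro i hi
      rcases eq_or_lt_of_le (hb i hi) with h0 | h0
      · rw [← h0, hab i hi (h0.symm)]; simp
      · simp only [Function.comp, smul_eq_mul]
        field_simp
    rw [h1, h2] at key
    have hBne : B ≠ 0 := ne_of_gt hB0
    simp only [smul_eq_mul] at key
    -- key : (B⁻¹ * A) * log (B⁻¹ * A) ≤ B⁻¹ * Σ
    have : B * ((B⁻¹ * A) * Real.log (B⁻¹ * A)) ≤ B * (B⁻¹ * (∑ i ∈ s, a i * Real.log (a i / b i))) :=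
      mul_le_mul_of_nonneg_left key hBnn
    rw [← mul_assoc, ← mul_assoc, mul_inv_cancel₀ hBne, one_mul] at this
    rw [mul_inv_cancel_left₀ hBne] at this
    rwa [show A / B = B⁻¹ * A by rw [div_eq_inv_mul]] 

/-- Sum version of Gibbs: if sums are equal, the KL-type sum is nonnegative. -/
lemma KLsum_nonneg {ι : Type*} (s : Finset ι) (a b : ι → ℝ)
    (ha : ∀ i ∈ s, 0 ≤ a i) (hb : ∀ i ∈ s, 0 ≤ b i)
    (hab : ∀ i ∈ s, b i = 0 → a i = 0) (hsum : ∑ i ∈ s, a i = ∑ i ∈ s, b i) :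
    0 ≤ ∑ i ∈ s, a i * Real.log (a i / b i) := by
  have h := log_sum_ineq s a b ha hb hab
  rw [hsum] at h
  refine le_trans ?_ h
  rcases eq_or_ne (∑ i ∈ s, b i) 0 with h0 | h0
  · simp [h0]
  · rw [div_self h0, Real.log_one, mul_zero]

/-- Strict positivity of KL for distinct pmfs with positive reference. -/
lemma KLsum_pos {ι : Type*} [Fintype ι] (a b : ι → ℝ)
    (ha : ∀ i, 0 ≤ a i) (hb : ∀ i, 0 < b i)
    (hsa : ∑ i, a i = 1) (hsb : ∑ i, b i = 1) (hne : a ≠ b) :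
    0 < ∑ i, a i * Real.log (a i / b i) := by
  obtain ⟨i₀, hi₀⟩ := Function.ne_iff.1 hne
  have key : ∑ i, (a i - b i) < ∑ i, a i * Real.log (a i / b i) := by
    apply Finset.sum_lt_sum
    · intro i _
      exact gibbs_scalar (ha i) (hb i).le (fun h => absurd h (ne_of_gt (hb i)))
    · exact ⟨i₀, Finset.mem_univ _, gibbs_scalar_strict (ha i₀) (hb i₀) hi₀⟩
  rwa [Finset.sum_sub_distrib, hsa, hsb, sub_self] at key

/-- Scaling a KL-type sum. -/
lemma KLsum_smul {ι : Type*} (s : Finset ι) (a b : ι → ℝ) {c : ℝ} (hc : 0 ≤ c) :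
    ∑ i ∈ s, (c * a i) * Real.log ((c * a i) / (c * b i))
      = c * ∑ i ∈ s, a i * Real.log (a i / b i) := by
  rcases eq_or_lt_of_le hc with h0 | h0
  · simp [← h0]
  · rw [Finset.mul_sum]
    apply Finset.sum_congr rfl
    intro i _
    rw [mul_div_mul_left _ _ (ne_of_gt h0)]
    ring

/-- Per-entry identity used for DPI. -/
lemma dpi_entry {rx px w : ℝ} (hsupp : px = 0 → rx = 0) (hw : 0 ≤ w) :
    (rx * w) * Real.log ((rx * w) / (px * w)) = w * (rx * Real.log (rx / px)) := by
  rcases eq_or_lt_of_le hw with h0 | h0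
  · simp [← h0]
  rcases eq_or_ne px 0 with hp0 | hp0
  · simp [hp0, hsupp hp0]
  · rw [mul_div_mul_right _ _ (ne_of_gt h0)]
    ring

/-- Data processing inequality (finite, raw-sum form). -/
lemma dpi_raw {X Y : Type*} [Fintype X] [Fintype Y] (r p : X → ℝ) (W : X → Y → ℝ)
    (hr : ∀ x, 0 ≤ r x) (hp : ∀ x, 0 ≤ p x) (hW : ∀ x y, 0 ≤ W x y)
    (hWrow : ∀ x, ∑ y, W x y = 1) (hsupp : ∀ x, p x = 0 → r x = 0) :
    ∑ y, (∑ x, r x * W x y) * Real.log ((∑ x, r x * W x y) / (∑ x, p x * W x y))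
      ≤ ∑ x, r x * Real.log (r x / p x) := by
  have step1 : ∀ y, (∑ x, r x * W x y) * Real.log ((∑ x, r x * W x y) / (∑ x, p x * W x y))
      ≤ ∑ x, (r x * W x y) * Real.log ((r x * W x y) / (p x * W x y)) := by
    intro y
    apply log_sum_ineq
    · intro x _; exact mul_nonneg (hr x) (hW x y)
    · intro x _; exact mul_nonneg (hp x) (hW x y)
    · intro x _ h
      rcases mul_eq_zero.1 h with h1 | h1
      · rw [hsupp x h1, zero_mul]
      · rw [h1, mul_zero]
  calc ∑ y, (∑ x, r x * W x y) * Real.log ((∑ x, r x * W x y) / (∑ x, p x * W x y))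
      ≤ ∑ y, ∑ x, (r x * W x y) * Real.log ((r x * W x y) / (p x * W x y)) :=
        Finset.sum_le_sum fun y _ => step1 y
    _ = ∑ x, ∑ y, (r x * W x y) * Real.log ((r x * W x y) / (p x * W x y)) :=
        Finset.sum_comm
    _ = ∑ x, ∑ y, W x y * (r x * Real.log (r x / p x)) := by
        apply Finset.sum_congr rfl; intro x _
        apply Finset.sum_congr rfl; intro y _
        exact dpi_entry (hsupp x) (hW x y)
    _ = ∑ x, r x * Real.log (r x / p x) := by
        apply Finset.sum_congr rfl; intro x _
        rw [← Finset.sum_mul, hWrow x, one_mul]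

/-- Generic chain rule for KL-type double sums. -/
lemma chain_rule {A B : Type*} [Fintype A] [Fintype B] (f : A → B → ℝ) (g : A → ℝ) (h : B → ℝ)
    (hf : ∀ a b, 0 ≤ f a b)
    (hg0 : ∀ a b, g a = 0 → f a b = 0) (hh0 : ∀ a b, h b = 0 → f a b = 0)
    (f1 : A → ℝ) (hf1 : ∀ a, f1 a = ∑ b, f a b) :
    ∑ a, ∑ b, f a b * Real.log (f a b / (g a * h b))
      = (∑ a, f1 a * Real.log (f1 a / g a))
        + ∑ a, ∑ b, f a b * Real.log (f a b / (f1 a * h b)) := by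
  rw [← Finset.sum_add_distrib]
  apply Finset.sum_congr rfl
  intro a _
  have hrw : f1 a * Real.log (f1 a / g a) = ∑ b, f a b * Real.log (f1 a / g a) := by
    rw [← Finset.sum_mul, ← hf1]
  rw [hrw, ← Finset.sum_add_distrib]
  apply Finset.sum_congr rfl
  intro b _
  rcases eq_or_lt_of_le (hf a b) with h0 | h0
  · simp [← h0]
  · have hga : g a ≠ 0 := fun hg => absurd (hg0 a b hg) (ne_of_gt h0)
    have hhb : h b ≠ 0 := fun hh => absurd (hh0 a b hh) (ne_of_gt h0)
    have hf1a : 0 < f1 a := by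
      rw [hf1 a]
      exact lt_of_lt_of_le h0 (Finset.single_le_sum (fun b' _ => hf a b') (Finset.mem_univ b))
    have hsplit : Real.log (f a b / (g a * h b))
        = Real.log (f1 a / g a) + Real.log (f a b / (f1 a * h b)) := by
      rw [← Real.log_mul (div_ne_zero (ne_of_gt hf1a) hga)
        (div_ne_zero (ne_of_gt h0) (mul_ne_zero (ne_of_gt hf1a) hhb))]
      congr 1
      field_simp
    rw [hsplit]; ring

/-- KL of identical arguments vanishes. -/
lemma KL_self {X : Type*} [Fintype X] (a : X → ℝ) : KL a a = 0 := by
  unfold KL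
  apply Finset.sum_eq_zero
  intro x _
  rcases eq_or_ne (a x) 0 with h | h
  · simp [h]
  · rw [div_self h, Real.log_one, mul_zero]

/-- Every element of the `sStar` set is at most 1 (DPI), hence the set is bounded above. -/
lemma sStar_set_bddAbove {X Y : Type*} [Fintype X] [Fintype Y] (p : X → ℝ) (W : X → Y → ℝ)
    (hp : IsPMF p) (hppos : ∀ x, 0 < p x) (hW : ∀ x, IsPMF (W x)) :
    BddAbove {c : ℝ | ∃ r : X → ℝ, IsPMF r ∧ r ≠ p ∧
      c = KL (fun y => ∑ x, r x * W x y) (fun y => ∑ x, p x * W x y) / KL r p} := by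
  refine ⟨1, fun c hc => ?_⟩
  obtain ⟨r, hr, hrne, rfl⟩ := hc
  have hin : 0 < KL r p := KLsum_pos r p hr.1 hppos hr.2 hp.2 hrne
  have hout : KL (fun y => ∑ x, r x * W x y) (fun y => ∑ x, p x * W x y) ≤ KL r p :=
    dpi_raw r p W hr.1 hp.1 (fun x y => (hW x).1 y) (fun x => (hW x).2)
      (fun x hx => absurd hx (ne_of_gt (hppos x)))
  exact div_le_one_of_le₀ hout hin.le

/-- `sStar` is nonnegative. -/
lemma sStar_nonneg {X Y : Type*} [Fintype X] [Fintype Y] (p : X → ℝ) (W : X → Y → ℝ)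
    (hp : IsPMF p) (hppos : ∀ x, 0 < p x) (hW : ∀ x, IsPMF (W x)) :
    0 ≤ sStar p W := by
  apply Real.sSup_nonneg
  rintro c ⟨r, hr, hrne, rfl⟩
  have hin : 0 < KL r p := KLsum_pos r p hr.1 hppos hr.2 hp.2 hrne
  have hout : 0 ≤ KL (fun y => ∑ x, r x * W x y) (fun y => ∑ x, p x * W x y) := by
    apply KLsum_nonneg
    · intro y _; exact Finset.sum_nonneg fun x _ => mul_nonneg (hr.1 x) ((hW x).1 y)
    · intro y _; exact Finset.sum_nonneg fun x _ => mul_nonneg (hppos x).le ((hW x).1 y)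
    · intro y _ h
      apply Finset.sum_eq_zero
      intro x _
      have hWx : W x y = 0 := by
        have := (Finset.sum_eq_zero_iff_of_nonneg
          (fun x _ => mul_nonneg (hppos x).le ((hW x).1 y))).1 h x (Finset.mem_univ x)
        rcases mul_eq_zero.1 this with h1 | h1
        · exact absurd h1 (ne_of_gt (hppos x))
        · exact h1
      rw [hWx, mul_zero]
    · have key : ∀ (u : X → ℝ), (∑ x, u x = 1) → ∑ y, ∑ x, u x * W x y = 1 := by
        intro u hu
        rw [Finset.sum_comm]
        simp only [← Finset.mul_sum]
        calc ∑ x, u x * ∑ y, W x y = ∑ x, u x := by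
              apply Finset.sum_congr rfl; intro x _; rw [(hW x).2, mul_one]
          _ = 1 := hu
        
      rw [key r hr.2, key p hp.2]
  exact div_nonneg hout hin.le

/-- Key consequence of the definition of `sStar`: output divergence ≤ `sStar` × input divergence. -/
lemma KL_out_le_sStar_mul {X Y : Type*} [Fintype X] [Fintype Y] (p : X → ℝ) (W : X → Y → ℝ)
    (hp : IsPMF p) (hppos : ∀ x, 0 < p x) (hW : ∀ x, IsPMF (W x))
    (ρ : X → ℝ) (hρ : IsPMF ρ) :
    KL (fun y => ∑ x, ρ x * W x y) (fun y => ∑ x, p x * W x y) ≤ sStar p W * KL ρ p := by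
  rcases eq_or_ne ρ p with rfl | hne
  · rw [KL_self, KL_self, mul_zero]
  · have hin : 0 < KL ρ p := KLsum_pos ρ p hρ.1 hppos hρ.2 hp.2 hne
    have hmem : KL (fun y => ∑ x, ρ x * W x y) (fun y => ∑ x, p x * W x y) / KL ρ p
        ∈ {c : ℝ | ∃ r : X → ℝ, IsPMF r ∧ r ≠ p ∧
          c = KL (fun y => ∑ x, r x * W x y) (fun y => ∑ x, p x * W x y) / KL r p} :=
      ⟨ρ, hρ, hne, rfl⟩
    have hle := le_csSup (sStar_set_bddAbove p W hp hppos hW) hmem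
    rw [div_le_iff₀ hin] at hle
    calc KL (fun y => ∑ x, ρ x * W x y) (fun y => ∑ x, p x * W x y) ≤ sStar p W * KL ρ p := hle

section Core
variable {X₁ Y₁ X₂ Y₂ : Type*} [Fintype X₁] [Fintype Y₁] [Fintype X₂] [Fintype Y₂]

/-- Core bound: joint output divergence ≤ max of the two `sStar`'s times joint input divergence. -/
lemma joint_KL_le (p₁ : X₁ → ℝ) (W₁ : X₁ → Y₁ → ℝ) (p₂ : X₂ → ℝ) (W₂ : X₂ → Y₂ → ℝ)
    (hp₁ : IsPMF p₁) (hp₁pos : ∀ x, 0 < p₁ x) (hW₁ : ∀ x, IsPMF (W₁ x))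
    (hp₂ : IsPMF p₂) (hp₂pos : ∀ x, 0 < p₂ x) (hW₂ : ∀ x, IsPMF (W₂ x))
    (r : X₁ × X₂ → ℝ) (hr : IsPMF r) :
    KL (fun b : Y₁ × Y₂ => ∑ a : X₁ × X₂, r a * (W₁ a.1 b.1 * W₂ a.2 b.2))
        (fun b : Y₁ × Y₂ => ∑ a : X₁ × X₂, (p₁ a.1 * p₂ a.2) * (W₁ a.1 b.1 * W₂ a.2 b.2))
      ≤ max (sStar p₁ W₁) (sStar p₂ W₂) * KL r (fun a : X₁ × X₂ => p₁ a.1 * p₂ a.2) := by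
  set s₁ := sStar p₁ W₁ with hs₁def
  set s₂ := sStar p₂ W₂ with hs₂def
  set M := max s₁ s₂ with hMdef
  have hs₂nn : 0 ≤ s₂ := sStar_nonneg p₂ W₂ hp₂ hp₂pos hW₂
  -- marginals and conditionals
  set r₁ : X₁ → ℝ := fun x₁ => ∑ x₂, r (x₁, x₂) with hr₁def
  have hr₁nn : ∀ x₁, 0 ≤ r₁ x₁ := fun x₁ => Finset.sum_nonneg fun x₂ _ => hr.1 _
  have hrle : ∀ x₁ x₂, r (x₁, x₂) ≤ r₁ x₁ := fun x₁ x₂ =>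
    Finset.single_le_sum (fun x₂' _ => hr.1 (x₁, x₂')) (Finset.mem_univ x₂)
  have hr₁0 : ∀ x₁ x₂, r₁ x₁ = 0 → r (x₁, x₂) = 0 := fun x₁ x₂ h =>
    le_antisymm (h ▸ hrle x₁ x₂) (hr.1 _)
  have hr₁sum : ∑ x₁, r₁ x₁ = 1 := by
    rw [← hr.2, Fintype.sum_prod_type]
  have hr₁pmf : IsPMF r₁ := ⟨hr₁nn, hr₁sum⟩
  set T : X₁ → ℝ := fun x₁ => ∑ x₂, r (x₁, x₂) * Real.log (r (x₁, x₂) / (r₁ x₁ * p₂ x₂))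
    with hTdef
  have hTnn : ∀ x₁, 0 ≤ T x₁ := by
    intro x₁
    apply KLsum_nonneg
    · intro x₂ _; exact hr.1 _
    · intro x₂ _; exact mul_nonneg (hr₁nn x₁) (hp₂pos x₂).le
    · intro x₂ _ h
      rcases mul_eq_zero.1 h with h1 | h1
      · exact hr₁0 x₁ x₂ h1
      · exact absurd h1 (ne_of_gt (hp₂pos x₂))
    · rw [← Finset.mul_sum, hp₂.2, mul_one]
  -- input chain rule
  have hKLin : KL r (fun a : X₁ × X₂ => p₁ a.1 * p₂ a.2)
      = (∑ x₁, r₁ x₁ * Real.log (r₁ x₁ / p₁ x₁)) + ∑ x₁, T x₁ := by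
    unfold KL
    rw [Fintype.sum_prod_type]
    exact chain_rule (fun x₁ x₂ => r (x₁, x₂)) p₁ p₂ (fun x₁ x₂ => hr.1 _)
      (fun x₁ x₂ h => absurd h (ne_of_gt (hp₁pos x₁)))
      (fun x₁ x₂ h => absurd h (ne_of_gt (hp₂pos x₂))) r₁ (fun _ => rfl)
  have hDin1nn : 0 ≤ ∑ x₁, r₁ x₁ * Real.log (r₁ x₁ / p₁ x₁) := by
    apply KLsum_nonneg
    · intro x₁ _; exact hr₁nn x₁
    · intro x₁ _; exact (hp₁pos x₁).le
    · intro x₁ _ h; exact absurd h (ne_of_gt (hp₁pos x₁))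
    · rw [hr₁sum, hp₁.2]
  -- output quantities
  set q : Y₁ → Y₂ → ℝ := fun y₁ y₂ => ∑ x₁, ∑ x₂, r (x₁, x₂) * (W₁ x₁ y₁ * W₂ x₂ y₂) with hqdef
  have hqnn : ∀ y₁ y₂, 0 ≤ q y₁ y₂ := fun y₁ y₂ =>
    Finset.sum_nonneg fun x₁ _ => Finset.sum_nonneg fun x₂ _ =>
      mul_nonneg (hr.1 _) (mul_nonneg ((hW₁ x₁).1 y₁) ((hW₂ x₂).1 y₂))
  set q₁ : Y₁ → ℝ := fun y₁ => ∑ x₁, r₁ x₁ * W₁ x₁ y₁ with hq₁def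
  have hq₁nn : ∀ y₁, 0 ≤ q₁ y₁ := fun y₁ =>
    Finset.sum_nonneg fun x₁ _ => mul_nonneg (hr₁nn x₁) ((hW₁ x₁).1 y₁)
  have hq₁eq : ∀ y₁, q₁ y₁ = ∑ y₂, q y₁ y₂ := by
    intro y₁
    have step : ∀ x₁, ∑ y₂, ∑ x₂, r (x₁, x₂) * (W₁ x₁ y₁ * W₂ x₂ y₂) = r₁ x₁ * W₁ x₁ y₁ := by
      intro x₁
      rw [Finset.sum_comm]
      have inner : ∀ x₂, ∑ y₂, r (x₁, x₂) * (W₁ x₁ y₁ * W₂ x₂ y₂) = r (x₁, x₂) * W₁ x₁ y₁ := by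
        intro x₂
        simp only [← Finset.mul_sum]
        rw [(hW₂ x₂).2, mul_one]
      rw [Finset.sum_congr rfl fun x₂ _ => inner x₂, ← Finset.sum_mul]
    calc q₁ y₁ = ∑ x₁, r₁ x₁ * W₁ x₁ y₁ := rfl
      _ = ∑ x₁, ∑ y₂, ∑ x₂, r (x₁, x₂) * (W₁ x₁ y₁ * W₂ x₂ y₂) :=
          Finset.sum_congr rfl fun x₁ _ => (step x₁).symm
      _ = ∑ y₂, q y₁ y₂ := Finset.sum_comm
  set F' : Y₁ → ℝ := fun y₁ => ∑ x₁, p₁ x₁ * W₁ x₁ y₁ with hF'def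
  set G' : Y₂ → ℝ := fun y₂ => ∑ x₂, p₂ x₂ * W₂ x₂ y₂ with hG'def
  have hF'0 : ∀ y₁, F' y₁ = 0 → ∀ x₁, W₁ x₁ y₁ = 0 := by
    intro y₁ h x₁
    have := (Finset.sum_eq_zero_iff_of_nonneg
      (fun x _ => mul_nonneg (hp₁pos x).le ((hW₁ x).1 y₁))).1 h x₁ (Finset.mem_univ x₁)
    rcases mul_eq_zero.1 this with h1 | h1
    · exact absurd h1 (ne_of_gt (hp₁pos x₁))
    · exact h1
  have hG'0 : ∀ y₂, G' y₂ = 0 → ∀ x₂, W₂ x₂ y₂ = 0 := by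
    intro y₂ h x₂
    have := (Finset.sum_eq_zero_iff_of_nonneg
      (fun x _ => mul_nonneg (hp₂pos x).le ((hW₂ x).1 y₂))).1 h x₂ (Finset.mem_univ x₂)
    rcases mul_eq_zero.1 this with h1 | h1
    · exact absurd h1 (ne_of_gt (hp₂pos x₂))
    · exact h1
  have hqF' : ∀ y₁ y₂, F' y₁ = 0 → q y₁ y₂ = 0 := by
    intro y₁ y₂ h
    apply Finset.sum_eq_zero; intro x₁ _
    apply Finset.sum_eq_zero; intro x₂ _
    rw [hF'0 y₁ h x₁]; ring
  have hqG' : ∀ y₁ y₂, G' y₂ = 0 → q y₁ y₂ = 0 := by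
    intro y₁ y₂ h
    apply Finset.sum_eq_zero; intro x₁ _
    apply Finset.sum_eq_zero; intro x₂ _
    rw [hG'0 y₂ h x₂]; ring
  set S : Y₁ → ℝ := fun y₁ => ∑ y₂, q y₁ y₂ * Real.log (q y₁ y₂ / (q₁ y₁ * G' y₂)) with hSdef
  -- output chain rule
  have hKLout : KL (fun b : Y₁ × Y₂ => ∑ a : X₁ × X₂, r a * (W₁ a.1 b.1 * W₂ a.2 b.2))
      (fun b : Y₁ × Y₂ => ∑ a : X₁ × X₂, (p₁ a.1 * p₂ a.2) * (W₁ a.1 b.1 * W₂ a.2 b.2))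
      = (∑ y₁, q₁ y₁ * Real.log (q₁ y₁ / F' y₁)) + ∑ y₁, S y₁ := by
    have hnum : ∀ b : Y₁ × Y₂, (∑ a : X₁ × X₂, r a * (W₁ a.1 b.1 * W₂ a.2 b.2)) = q b.1 b.2 := by
      intro b
      rw [Fintype.sum_prod_type]
    have hden : ∀ b : Y₁ × Y₂,
        (∑ a : X₁ × X₂, (p₁ a.1 * p₂ a.2) * (W₁ a.1 b.1 * W₂ a.2 b.2)) = F' b.1 * G' b.2 := by
      intro b
      rw [Fintype.sum_prod_type, hF'def, hG'def]
      simp only [Finset.sum_mul_sum]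
      apply Finset.sum_congr rfl; intro x₁ _
      apply Finset.sum_congr rfl; intro x₂ _
      ring
    unfold KL
    simp only [hnum, hden]
    rw [Fintype.sum_prod_type]
    exact chain_rule q F' G' (fun y₁ y₂ => hqnn y₁ y₂)
      (fun y₁ y₂ h => hqF' y₁ y₂ h) (fun y₁ y₂ h => hqG' y₁ y₂ h) q₁ hq₁eq
  -- bound the first output term
  have hbound1 : (∑ y₁, q₁ y₁ * Real.log (q₁ y₁ / F' y₁))
      ≤ s₁ * ∑ x₁, r₁ x₁ * Real.log (r₁ x₁ / p₁ x₁) := by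
    have := KL_out_le_sStar_mul p₁ W₁ hp₁ hp₁pos hW₁ r₁ hr₁pmf
    unfold KL at this
    exact this
  -- bound each S y₁
  have hbound2 : ∀ y₁, S y₁ ≤ s₂ * ∑ x₁, W₁ x₁ y₁ * T x₁ := by
    intro y₁
    rcases eq_or_lt_of_le (hq₁nn y₁) with hQ0 | hQ0
    · -- q₁ y₁ = 0 : S y₁ = 0
      have hq0 : ∀ y₂, q y₁ y₂ = 0 := by
        intro y₂
        have hsum0 : ∑ y₂, q y₁ y₂ = 0 := by rw [← hq₁eq]; exact hQ0.symm
        exact (Finset.sum_eq_zero_iff_of_nonneg (fun y _ => hqnn y₁ y)).1 hsum0 y₂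
          (Finset.mem_univ y₂)
      have hS0 : S y₁ = 0 := by
        rw [hSdef]
        apply Finset.sum_eq_zero
        intro y₂ _
        rw [hq0 y₂, zero_mul]
      rw [hS0]
      exact mul_nonneg hs₂nn (Finset.sum_nonneg fun x₁ _ =>
        mul_nonneg ((hW₁ x₁).1 y₁) (hTnn x₁))
    · -- q₁ y₁ > 0
      set Q := q₁ y₁ with hQdef
      have hQne : Q ≠ 0 := ne_of_gt hQ0
      set μ : X₂ → ℝ := fun x₂ => (∑ x₁, r (x₁, x₂) * W₁ x₁ y₁) / Q with hμdef
      have hμnn : ∀ x₂, 0 ≤ μ x₂ := fun x₂ => div_nonneg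
        (Finset.sum_nonneg fun x₁ _ => mul_nonneg (hr.1 _) ((hW₁ x₁).1 y₁)) hQ0.le
      have hμsum : ∑ x₂, μ x₂ = 1 := by
        rw [hμdef, ← Finset.sum_div]
        rw [Finset.sum_comm]
        have : ∑ x₁, ∑ x₂, r (x₁, x₂) * W₁ x₁ y₁ = Q := by
          rw [hQdef, hq₁def]
          apply Finset.sum_congr rfl
          intro x₁ _
          rw [← Finset.sum_mul]
        rw [this, div_self hQne]
      have hμpmf : IsPMF μ := ⟨hμnn, hμsum⟩
      have hq' : ∀ y₂, q y₁ y₂ = Q * (∑ x₂, μ x₂ * W₂ x₂ y₂) := by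
        intro y₂
        rw [Finset.mul_sum]
        show ∑ x₁, ∑ x₂, r (x₁, x₂) * (W₁ x₁ y₁ * W₂ x₂ y₂) = ∑ x₂, Q * (μ x₂ * W₂ x₂ y₂)
        rw [Finset.sum_comm]
        apply Finset.sum_congr rfl
        intro x₂ _
        have hQμ : Q * (μ x₂ * W₂ x₂ y₂) = (∑ x₁, r (x₁, x₂) * W₁ x₁ y₁) * W₂ x₂ y₂ := by
          show Q * ((∑ x₁, r (x₁, x₂) * W₁ x₁ y₁) / Q * W₂ x₂ y₂) = _
          field_simp
        rw [hQμ, Finset.sum_mul]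
        apply Finset.sum_congr rfl
        intro x₁ _
        ring
      -- step a : S y₁ = Q * KL(μW₂ ‖ p₂W₂)
      have hSa : S y₁ = Q * ∑ y₂, (∑ x₂, μ x₂ * W₂ x₂ y₂)
          * Real.log ((∑ x₂, μ x₂ * W₂ x₂ y₂) / G' y₂) := by
        rw [hSdef]
        have : ∀ y₂, q y₁ y₂ * Real.log (q y₁ y₂ / (q₁ y₁ * G' y₂))
            = (Q * (∑ x₂, μ x₂ * W₂ x₂ y₂))
              * Real.log ((Q * (∑ x₂, μ x₂ * W₂ x₂ y₂)) / (Q * G' y₂)) := by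
          intro y₂; rw [← hq' y₂, ← hQdef]
        simp only [this]
        exact KLsum_smul Finset.univ (fun y₂ => ∑ x₂, μ x₂ * W₂ x₂ y₂) G' hQ0.le
      -- step b
      have hSb : (∑ y₂, (∑ x₂, μ x₂ * W₂ x₂ y₂)
            * Real.log ((∑ x₂, μ x₂ * W₂ x₂ y₂) / G' y₂))
          ≤ s₂ * ∑ x₂, μ x₂ * Real.log (μ x₂ / p₂ x₂) := by
        have := KL_out_le_sStar_mul p₂ W₂ hp₂ hp₂pos hW₂ μ hμpmf
        unfold KL at this
        exact this
      -- step c : KL μ p₂ ≤ ∑ x₁, (W₁ x₁ y₁ / Q) * T x₁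
      have hSc : (∑ x₂, μ x₂ * Real.log (μ x₂ / p₂ x₂))
          ≤ ∑ x₁, (W₁ x₁ y₁ / Q) * T x₁ := by
        have hstep : ∀ x₂, μ x₂ * Real.log (μ x₂ / p₂ x₂)
            ≤ ∑ x₁, ((W₁ x₁ y₁ / Q) * r (x₁, x₂))
              * Real.log (((W₁ x₁ y₁ / Q) * r (x₁, x₂)) / ((W₁ x₁ y₁ / Q) * (r₁ x₁ * p₂ x₂))) := by
          intro x₂
          have hμrw : μ x₂ = ∑ x₁, (W₁ x₁ y₁ / Q) * r (x₁, x₂) := by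
            show (∑ x₁, r (x₁, x₂) * W₁ x₁ y₁) / Q = _
            rw [Finset.sum_div]
            apply Finset.sum_congr rfl
            intro x₁ _
            ring
          have hbsum : ∑ x₁, (W₁ x₁ y₁ / Q) * (r₁ x₁ * p₂ x₂) = p₂ x₂ := by
            have h1 : ∑ x₁, (W₁ x₁ y₁ / Q) * (r₁ x₁ * p₂ x₂)
                = (∑ x₁, r₁ x₁ * W₁ x₁ y₁) / Q * p₂ x₂ := by
              rw [Finset.sum_div, Finset.sum_mul]
              apply Finset.sum_congr rfl
              intro x₁ _
              ring
            have h2 : (∑ x₁, r₁ x₁ * W₁ x₁ y₁) = Q := rfl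
            rw [h1, h2, div_self hQne, one_mul]
          have key := log_sum_ineq Finset.univ (fun x₁ => (W₁ x₁ y₁ / Q) * r (x₁, x₂))
            (fun x₁ => (W₁ x₁ y₁ / Q) * (r₁ x₁ * p₂ x₂))
            (fun x₁ _ => mul_nonneg (div_nonneg ((hW₁ x₁).1 y₁) hQ0.le) (hr.1 _))
            (fun x₁ _ => mul_nonneg (div_nonneg ((hW₁ x₁).1 y₁) hQ0.le)
              (mul_nonneg (hr₁nn x₁) (hp₂pos x₂).le))
            (by
              intro x₁ _ h
              rcases mul_eq_zero.1 h with h1 | h1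
              · rw [h1, zero_mul]
              · rcases mul_eq_zero.1 h1 with h2 | h2
                · rw [hr₁0 x₁ x₂ h2, mul_zero]
                · exact absurd h2 (ne_of_gt (hp₂pos x₂)))
          rw [hbsum, ← hμrw] at key
          exact key
        calc (∑ x₂, μ x₂ * Real.log (μ x₂ / p₂ x₂))
            ≤ ∑ x₂, ∑ x₁, ((W₁ x₁ y₁ / Q) * r (x₁, x₂))
              * Real.log (((W₁ x₁ y₁ / Q) * r (x₁, x₂)) / ((W₁ x₁ y₁ / Q) * (r₁ x₁ * p₂ x₂))) :=
              Finset.sum_le_sum fun x₂ _ => hstep x₂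
          _ = ∑ x₁, ∑ x₂, ((W₁ x₁ y₁ / Q) * r (x₁, x₂))
              * Real.log (((W₁ x₁ y₁ / Q) * r (x₁, x₂)) / ((W₁ x₁ y₁ / Q) * (r₁ x₁ * p₂ x₂))) :=
              Finset.sum_comm
          _ = ∑ x₁, (W₁ x₁ y₁ / Q) * T x₁ := by
              apply Finset.sum_congr rfl
              intro x₁ _
              exact KLsum_smul Finset.univ (fun x₂ => r (x₁, x₂)) (fun x₂ => r₁ x₁ * p₂ x₂)
                (div_nonneg ((hW₁ x₁).1 y₁) hQ0.le)
      -- combine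
      calc S y₁ = Q * ∑ y₂, (∑ x₂, μ x₂ * W₂ x₂ y₂)
            * Real.log ((∑ x₂, μ x₂ * W₂ x₂ y₂) / G' y₂) := hSa
        _ ≤ Q * (s₂ * ∑ x₂, μ x₂ * Real.log (μ x₂ / p₂ x₂)) :=
            mul_le_mul_of_nonneg_left hSb hQ0.le
        _ ≤ Q * (s₂ * ∑ x₁, (W₁ x₁ y₁ / Q) * T x₁) := by
            apply mul_le_mul_of_nonneg_left _ hQ0.le
            exact mul_le_mul_of_nonneg_left hSc hs₂nn
        _ = s₂ * ∑ x₁, W₁ x₁ y₁ * T x₁ := by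
            rw [Finset.mul_sum, Finset.mul_sum, Finset.mul_sum]
            apply Finset.sum_congr rfl
            intro x₁ _
            field_simp
  -- assemble
  have hsum2 : (∑ y₁, S y₁) ≤ s₂ * ∑ x₁, T x₁ := by
    calc (∑ y₁, S y₁) ≤ ∑ y₁, s₂ * ∑ x₁, W₁ x₁ y₁ * T x₁ :=
          Finset.sum_le_sum fun y₁ _ => hbound2 y₁
      _ = s₂ * ∑ x₁, T x₁ := by
          rw [← Finset.mul_sum]
          congr 1
          rw [Finset.sum_comm]
          apply Finset.sum_congr rfl
          intro x₁ _
          rw [← Finset.sum_mul, (hW₁ x₁).2, one_mul]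
  have hTsumnn : 0 ≤ ∑ x₁, T x₁ := Finset.sum_nonneg fun x₁ _ => hTnn x₁
  rw [hKLout, hKLin]
  have hs₁M : s₁ ≤ M := le_max_left _ _
  have hs₂M : s₂ ≤ M := le_max_right _ _
  calc (∑ y₁, q₁ y₁ * Real.log (q₁ y₁ / F' y₁)) + ∑ y₁, S y₁
      ≤ s₁ * (∑ x₁, r₁ x₁ * Real.log (r₁ x₁ / p₁ x₁)) + s₂ * ∑ x₁, T x₁ :=
        add_le_add hbound1 hsum2
    _ ≤ M * (∑ x₁, r₁ x₁ * Real.log (r₁ x₁ / p₁ x₁)) + M * ∑ x₁, T x₁ :=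
        add_le_add (mul_le_mul_of_nonneg_right hs₁M hDin1nn)
          (mul_le_mul_of_nonneg_right hs₂M hTsumnn)
    _ = M * ((∑ x₁, r₁ x₁ * Real.log (r₁ x₁ / p₁ x₁)) + ∑ x₁, T x₁) := by ring

end Core

/-- Output distribution of a pmf through a channel sums to one. -/
lemma out_sum_one {X Y : Type*} [Fintype X] [Fintype Y] (u : X → ℝ) (W : X → Y → ℝ)
    (hu : ∑ x, u x = 1) (hW : ∀ x, ∑ y, W x y = 1) :
    ∑ y, ∑ x, u x * W x y = 1 := by
  rw [Finset.sum_comm]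
  calc ∑ x, ∑ y, u x * W x y = ∑ x, u x := by
        apply Finset.sum_congr rfl; intro x _
        rw [← Finset.mul_sum, hW x, mul_one]
    _ = 1 := hu

/-- KL of a product with a common second factor. -/
lemma KL_prod_right {A B : Type*} [Fintype A] [Fintype B] (F F' : A → ℝ) (G : B → ℝ)
    (hG : ∀ b, 0 ≤ G b) (hGsum : ∑ b, G b = 1) (hsupp : ∀ a, F' a = 0 → F a = 0) :
    ∑ a, ∑ b, (F a * G b) * Real.log ((F a * G b) / (F' a * G b))
      = ∑ a, F a * Real.log (F a / F' a) := by
  apply Finset.sum_congr rfl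
  intro a _
  have : ∀ b, (F a * G b) * Real.log ((F a * G b) / (F' a * G b))
      = G b * (F a * Real.log (F a / F' a)) := fun b => dpi_entry (hsupp a) (hG b)
  rw [Finset.sum_congr rfl fun b _ => this b, ← Finset.sum_mul, hGsum, one_mul]

/-- KL of a product with a common first factor. -/
lemma KL_prod_left {A B : Type*} [Fintype A] [Fintype B] (F F' : B → ℝ) (G : A → ℝ)
    (hG : ∀ a, 0 ≤ G a) (hGsum : ∑ a, G a = 1) (hsupp : ∀ b, F' b = 0 → F b = 0) :
    ∑ a, ∑ b, (G a * F b) * Real.log ((G a * F b) / (G a * F' b))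
      = ∑ b, F b * Real.log (F b / F' b) := by
  rw [Finset.sum_comm]
  calc ∑ b, ∑ a, (G a * F b) * Real.log ((G a * F b) / (G a * F' b))
      = ∑ b, ∑ a, (F b * G a) * Real.log ((F b * G a) / (F' b * G a)) := by
        apply Finset.sum_congr rfl; intro b _
        apply Finset.sum_congr rfl; intro a _
        rw [mul_comm (G a) (F b), mul_comm (G a) (F' b)]
    _ = ∑ b, F b * Real.log (F b / F' b) :=
        KL_prod_right F F' G hG hGsum hsupp

lemma out_zero {X Y : Type*} [Fintype X] [Fintype Y] (p : X → ℝ) (W : X → Y → ℝ)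
    (hppos : ∀ x, 0 < p x) (hW : ∀ x y, 0 ≤ W x y) {y : Y}
    (h : ∑ x, p x * W x y = 0) : ∀ x, W x y = 0 := by
  intro x
  have := (Finset.sum_eq_zero_iff_of_nonneg
    (fun x' _ => mul_nonneg (hppos x').le (hW x' y))).1 h x (Finset.mem_univ x)
  rcases mul_eq_zero.1 this with h1 | h1
  · exact absurd h1 (ne_of_gt (hppos x))
  · exact h1


/-- tensorization of `s*`. For independent pairs `(X₁,Y₁) ∼ p₁(x)W₁(y|x)`
and `(X₂,Y₂) ∼ p₂(x)W₂(y|x)`,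
`s*((X₁,X₂);(Y₁,Y₂)) = max {s*(X₁;Y₁), s*(X₂;Y₂)}`. -/
theorem sStar_tensorization {X₁ Y₁ X₂ Y₂ : Type*}
    [Fintype X₁] [Fintype Y₁] [Fintype X₂] [Fintype Y₂]
    (p₁ : X₁ → ℝ) (W₁ : X₁ → Y₁ → ℝ) (p₂ : X₂ → ℝ) (W₂ : X₂ → Y₂ → ℝ)
    (hp₁ : IsPMF p₁) (hp₁pos : ∀ x, 0 < p₁ x) (hW₁ : ∀ x, IsPMF (W₁ x))
    (hp₂ : IsPMF p₂) (hp₂pos : ∀ x, 0 < p₂ x) (hW₂ : ∀ x, IsPMF (W₂ x)) :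
    sStar (fun a : X₁ × X₂ => p₁ a.1 * p₂ a.2)
        (fun (a : X₁ × X₂) (b : Y₁ × Y₂) => W₁ a.1 b.1 * W₂ a.2 b.2)
      = max (sStar p₁ W₁) (sStar p₂ W₂) := by
  have hpPMF : IsPMF (fun a : X₁ × X₂ => p₁ a.1 * p₂ a.2) := by
    refine ⟨fun a => mul_nonneg (hp₁pos a.1).le (hp₂pos a.2).le, ?_⟩
    rw [Fintype.sum_prod_type]
    calc ∑ x₁, ∑ x₂, p₁ x₁ * p₂ x₂ = ∑ x₁, p₁ x₁ * ∑ x₂, p₂ x₂ := by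
          apply Finset.sum_congr rfl; intro x₁ _; rw [Finset.mul_sum]
      _ = 1 := by rw [hp₂.2]; simpa using hp₁.2
  have hppos : ∀ a : X₁ × X₂, 0 < p₁ a.1 * p₂ a.2 :=
    fun a => mul_pos (hp₁pos a.1) (hp₂pos a.2)
  have hWPMF : ∀ a : X₁ × X₂, IsPMF fun b : Y₁ × Y₂ => W₁ a.1 b.1 * W₂ a.2 b.2 := by
    intro a
    refine ⟨fun b => mul_nonneg ((hW₁ a.1).1 b.1) ((hW₂ a.2).1 b.2), ?_⟩
    rw [Fintype.sum_prod_type]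
    calc ∑ y₁, ∑ y₂, W₁ a.1 y₁ * W₂ a.2 y₂ = ∑ y₁, W₁ a.1 y₁ * ∑ y₂, W₂ a.2 y₂ := by
          apply Finset.sum_congr rfl; intro y₁ _; rw [Finset.mul_sum]
      _ = 1 := by rw [(hW₂ a.2).2]; simpa using (hW₁ a.1).2
  -- nonemptiness of the factors
  have hne₁ : Nonempty X₁ := by
    by_contra h
    rw [not_nonempty_iff] at h
    have := hp₁.2
    rw [Finset.univ_eq_empty, Finset.sum_empty] at this
    norm_num at this
  have hne₂ : Nonempty X₂ := by
    by_contra h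
    rw [not_nonempty_iff] at h
    have := hp₂.2
    rw [Finset.univ_eq_empty, Finset.sum_empty] at this
    norm_num at this
  apply le_antisymm
  · -- joint ≤ max
    apply Real.sSup_le
    · rintro c ⟨r, hr, hrne, rfl⟩
      have hin : 0 < KL r (fun a : X₁ × X₂ => p₁ a.1 * p₂ a.2) :=
        KLsum_pos r _ hr.1 hppos hr.2 hpPMF.2 hrne
      rw [div_le_iff₀ hin]
      exact joint_KL_le p₁ W₁ p₂ W₂ hp₁ hp₁pos hW₁ hp₂ hp₂pos hW₂ r hr
    · exact le_max_of_le_left (sStar_nonneg p₁ W₁ hp₁ hp₁pos hW₁)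
  · -- max ≤ joint
    apply max_le
    · -- left embedding
      apply Real.sSup_le _ (sStar_nonneg _ _ hpPMF hppos hWPMF)
      rintro c ⟨ρ, hρ, hρne, rfl⟩
      apply le_csSup (sStar_set_bddAbove _ _ hpPMF hppos hWPMF)
      obtain ⟨x₂⟩ := hne₂
      obtain ⟨x₁, hx₁⟩ := Function.ne_iff.1 hρne
      refine ⟨fun a => ρ a.1 * p₂ a.2,
        ⟨fun a => mul_nonneg (hρ.1 a.1) (hp₂pos a.2).le, ?_⟩, ?_, ?_⟩
      · rw [Fintype.sum_prod_type]
        calc ∑ u₁, ∑ u₂, ρ u₁ * p₂ u₂ = ∑ u₁, ρ u₁ * ∑ u₂, p₂ u₂ := by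
              apply Finset.sum_congr rfl; intro u₁ _; rw [Finset.mul_sum]
          _ = 1 := by rw [hp₂.2]; simpa using hρ.2
      · intro heq
        apply hx₁
        have := congrFun heq (x₁, x₂)
        dsimp only at this
        exact mul_right_cancel₀ (ne_of_gt (hp₂pos x₂)) this
      · have hKLin : KL (fun a : X₁ × X₂ => ρ a.1 * p₂ a.2)
            (fun a : X₁ × X₂ => p₁ a.1 * p₂ a.2) = KL ρ p₁ := by
          unfold KL
          rw [Fintype.sum_prod_type]
          exact KL_prod_right ρ p₁ p₂ (fun b => (hp₂pos b).le) hp₂.2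
            (fun a ha => absurd ha (ne_of_gt (hp₁pos a)))
        have hnum : ∀ (u : X₁ → ℝ) (b : Y₁ × Y₂),
            (∑ a : X₁ × X₂, (u a.1 * p₂ a.2) * (W₁ a.1 b.1 * W₂ a.2 b.2))
              = (∑ v₁, u v₁ * W₁ v₁ b.1) * (∑ v₂, p₂ v₂ * W₂ v₂ b.2) := by
          intro u b
          rw [Fintype.sum_prod_type, Finset.sum_mul_sum]
          apply Finset.sum_congr rfl; intro v₁ _
          apply Finset.sum_congr rfl; intro v₂ _
          ring
        have hKLout : KL (fun b : Y₁ × Y₂ =>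
              ∑ a : X₁ × X₂, (ρ a.1 * p₂ a.2) * (W₁ a.1 b.1 * W₂ a.2 b.2))
            (fun b : Y₁ × Y₂ =>
              ∑ a : X₁ × X₂, (p₁ a.1 * p₂ a.2) * (W₁ a.1 b.1 * W₂ a.2 b.2))
            = KL (fun y => ∑ x, ρ x * W₁ x y) (fun y => ∑ x, p₁ x * W₁ x y) := by
          unfold KL
          simp only [hnum]
          rw [Fintype.sum_prod_type]
          exact KL_prod_right (fun y₁ => ∑ v₁, ρ v₁ * W₁ v₁ y₁)
            (fun y₁ => ∑ v₁, p₁ v₁ * W₁ v₁ y₁) (fun y₂ => ∑ v₂, p₂ v₂ * W₂ v₂ y₂)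
            (fun y₂ => Finset.sum_nonneg fun v₂ _ => mul_nonneg (hp₂pos v₂).le ((hW₂ v₂).1 y₂))
            (out_sum_one p₂ W₂ hp₂.2 fun x => (hW₂ x).2)
            (fun y₁ h => Finset.sum_eq_zero fun v₁ _ => by
              rw [out_zero p₁ W₁ hp₁pos (fun x y => (hW₁ x).1 y) h v₁, mul_zero])
        rw [hKLin, hKLout]
    · -- right embedding
      apply Real.sSup_le _ (sStar_nonneg _ _ hpPMF hppos hWPMF)
      rintro c ⟨ρ, hρ, hρne, rfl⟩
      apply le_csSup (sStar_set_bddAbove _ _ hpPMF hppos hWPMF)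
      obtain ⟨x₁⟩ := hne₁
      obtain ⟨x₂, hx₂⟩ := Function.ne_iff.1 hρne
      refine ⟨fun a => p₁ a.1 * ρ a.2,
        ⟨fun a => mul_nonneg (hp₁pos a.1).le (hρ.1 a.2), ?_⟩, ?_, ?_⟩
      · rw [Fintype.sum_prod_type]
        calc ∑ u₁, ∑ u₂, p₁ u₁ * ρ u₂ = ∑ u₁, p₁ u₁ * ∑ u₂, ρ u₂ := by
              apply Finset.sum_congr rfl; intro u₁ _; rw [Finset.mul_sum]
          _ = 1 := by rw [hρ.2]; simpa using hp₁.2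
      · intro heq
        apply hx₂
        have := congrFun heq (x₁, x₂)
        dsimp only at this
        exact mul_left_cancel₀ (ne_of_gt (hp₁pos x₁)) this
      · have hKLin : KL (fun a : X₁ × X₂ => p₁ a.1 * ρ a.2)
            (fun a : X₁ × X₂ => p₁ a.1 * p₂ a.2) = KL ρ p₂ := by
          unfold KL
          rw [Fintype.sum_prod_type]
          exact KL_prod_left ρ p₂ p₁ (fun a => (hp₁pos a).le) hp₁.2
            (fun b hb => absurd hb (ne_of_gt (hp₂pos b)))
        have hnum : ∀ (u : X₂ → ℝ) (b : Y₁ × Y₂),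
            (∑ a : X₁ × X₂, (p₁ a.1 * u a.2) * (W₁ a.1 b.1 * W₂ a.2 b.2))
              = (∑ v₁, p₁ v₁ * W₁ v₁ b.1) * (∑ v₂, u v₂ * W₂ v₂ b.2) := by
          intro u b
          rw [Fintype.sum_prod_type, Finset.sum_mul_sum]
          apply Finset.sum_congr rfl; intro v₁ _
          apply Finset.sum_congr rfl; intro v₂ _
          ring
        have hKLout : KL (fun b : Y₁ × Y₂ =>
              ∑ a : X₁ × X₂, (p₁ a.1 * ρ a.2) * (W₁ a.1 b.1 * W₂ a.2 b.2))
            (fun b : Y₁ × Y₂ =>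
              ∑ a : X₁ × X₂, (p₁ a.1 * p₂ a.2) * (W₁ a.1 b.1 * W₂ a.2 b.2))
            = KL (fun y => ∑ x, ρ x * W₂ x y) (fun y => ∑ x, p₂ x * W₂ x y) := by
          unfold KL
          simp only [hnum]
          rw [Fintype.sum_prod_type]
          exact KL_prod_left (fun y₂ => ∑ v₂, ρ v₂ * W₂ v₂ y₂)
            (fun y₂ => ∑ v₂, p₂ v₂ * W₂ v₂ y₂) (fun y₁ => ∑ v₁, p₁ v₁ * W₁ v₁ y₁)
            (fun y₁ => Finset.sum_nonneg fun v₁ _ => mul_nonneg (hp₁pos v₁).le ((hW₁ v₁).1 y₁))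
            (out_sum_one p₁ W₁ hp₁.2 fun x => (hW₁ x).2)
            (fun y₂ h => Finset.sum_eq_zero fun v₂ _ => by
              rw [out_zero p₂ W₂ hp₂pos (fun x y => (hW₂ x).1 y) h v₂, mul_zero])
        rw [hKLin, hKLout]
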